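/- Let κ(G, G*) be a dual pair of Lie groups with a coconjugation matched pair (Υ, Υ*). If Υ̃ : G × G* → G* is another action such that (Υ̃, Υ*) also forms a coconjugation matched pair, then there exists a map c : G × π₀(G*) → G* with c(g, [e]) = e such that Υ̃(g, η) = c(g, [η]) · Υ(g, η). In particular, if G* is connected, the coconjugation action Υ compatible with Υ* is unique. -/

import Mathlib

open scoped Manifold
open Set Metric

lemma aux_isLocallyConstant_of_mfderiv_zero
    {E' : Type*} [NormedAddCommGroup E'] [NormedSpace ℝ E']
    {H : Type*} [TopologicalSpace H] [ChartedSpace E' H]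
    [IsManifold 𝓘(ℝ, E') ((⊤ : ℕ∞) : WithTop ℕ∞) H]
    {f : H → H} (hc : Continuous f)
    (hfd : MDifferentiable 𝓘(ℝ, E') 𝓘(ℝ, E') f)
    (h0 : ∀ y, mfderiv 𝓘(ℝ, E') 𝓘(ℝ, E') f y = 0) : IsLocallyConstant f := by
  rw [IsLocallyConstant.iff_eventually_eq]
  intro x
  set I : ModelWithCorners ℝ E' E' := 𝓘(ℝ, E') with hI
  set φ : PartialEquiv H E' := extChartAt I x with hφ
  set ψ : PartialEquiv H E' := extChartAt I (f x) with hψ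
  set t : Set E' := φ.target ∩ φ.symm ⁻¹' (f ⁻¹' ψ.source) with ht
  have hto : IsOpen t := by
    apply (continuousOn_extChartAt_symm x).isOpen_inter_preimage
      (isOpen_extChartAt_target x)
    exact (isOpen_extChartAt_source (f x)).preimage hc
  have hxt : φ x ∈ t := by
    refine ⟨mem_extChartAt_target x, ?_⟩
    rw [mem_preimage, φ.left_inv (mem_extChartAt_source x)]
    exact mem_extChartAt_source (f x)
  obtain ⟨ε, hε, hball⟩ := Metric.isOpen_iff.1 hto _ hxt
  set F : E' → E' := ψ ∘ f ∘ φ.symm with hF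
  -- for each z in the ball, F is differentiable at z with zero derivative
  have key : ∀ z ∈ ball (φ x) ε, MDifferentiableAt I I F z ∧ mfderiv I I F z = 0 := by
    intro z hz
    have hzt : z ∈ t := hball hz
    have h1 : MDifferentiableAt I I φ.symm z := by
      have := mdifferentiableWithinAt_extChartAt_symm (x := x) (I := I) hzt.1
      rwa [hI, modelWithCornersSelf_coe, range_id, mdifferentiableWithinAt_univ] at this
    have h2 : MDifferentiableAt I I f (φ.symm z) := hfd _
    have h3 : MDifferentiableAt I I ψ (f (φ.symm z)) := by
      apply mdifferentiableAt_extChartAt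
      have := hzt.2
      rwa [mem_preimage, mem_preimage, hψ, extChartAt_source] at this
    constructor
    · exact (h3.comp _ h2).comp _ h1
    · have e1 : mfderiv I I F z
          = (mfderiv I I (ψ ∘ f) (φ.symm z)).comp (mfderiv I I φ.symm z) :=
        mfderiv_comp z (h3.comp _ h2) h1
      have e2 : mfderiv I I (ψ ∘ f) (φ.symm z)
          = (mfderiv I I ψ (f (φ.symm z))).comp (mfderiv I I f (φ.symm z)) :=
        mfderiv_comp (φ.symm z) h3 h2
      rw [e1, e2, h0, ContinuousLinearMap.comp_zero, ContinuousLinearMap.zero_comp]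
  have hdiff : DifferentiableOn ℝ F (ball (φ x) ε) := fun z hz =>
    (mdifferentiableAt_iff_differentiableAt.1 (key z hz).1).differentiableWithinAt
  have hfz : ∀ z ∈ ball (φ x) ε, fderivWithin ℝ F (ball (φ x) ε) z = 0 := by
    intro z hz
    rw [fderivWithin_of_isOpen isOpen_ball hz, ← mfderiv_eq_fderiv, (key z hz).2]
    rfl
  have hconst : ∀ z ∈ ball (φ x) ε, F z = F (φ x) := fun z hz =>
    (convex_ball _ _).is_const_of_fderivWithin_eq_zero hdiff hfz hz
      (mem_ball_self hε)
  -- pull back to a neighbourhood of x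
  set V : Set H := φ.source ∩ φ ⁻¹' ball (φ x) ε with hV
  have hVo : IsOpen V :=
    (continuousOn_extChartAt x).isOpen_inter_preimage (isOpen_extChartAt_source x)
      isOpen_ball
  have hxV : x ∈ V := ⟨mem_extChartAt_source x, mem_ball_self hε⟩
  refine Filter.eventually_of_mem (hVo.mem_nhds hxV) ?_
  intro y hy
  have hyb : φ y ∈ ball (φ x) ε := hy.2
  have hyt : φ y ∈ t := hball hyb
  have hyy : φ.symm (φ y) = y := φ.left_inv hy.1
  have h1 : F (φ y) = F (φ x) := hconst _ hyb
  have h2 : F (φ y) = ψ (f y) := by rw [hF]; simp [hyy]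
  have h3 : F (φ x) = ψ (f x) := by
    rw [hF]; simp only [Function.comp_apply, φ.left_inv (mem_extChartAt_source x)]
  have hfy : f y ∈ ψ.source := by
    have := hyt.2; rwa [mem_preimage, mem_preimage, hyy] at this
  exact ψ.injOn hfy (mem_extChartAt_source (f x)) (by rw [← h2, ← h3, h1])


/-!
STATEMENT 3 (uniqueness of coconjugation actions).
Let `κ(G, G*)` be a dual pair of Lie groups: `G` and `H = G*` are Lie groups
(modelled on the normed spaces `E` and `E'`, so that their Lie algebras are
identified with `E` and `E'`) whose Lie algebras are in weakly non-degenerate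
duality `κ`.  The κ-coadjoint actions are the data `coadG : G → (E' → E')` and
`coadH : H → (E → E)` characterised by
`κ(A, Ad*_a μ) = κ(Ad_a A, μ)` and `κ(Ad*_b A, ν) = κ(A, Ad_b ν)`, where the
adjoint actions are the derivatives of conjugation at the identity (`mfderiv`).
A coconjugation matched pair `(Υ, Υ*) = (U, Us)` consists of smooth left actions
of `G` on `H` and of `H` on `G` fixing the identities, whose derivatives at the
identity are `T_e Υ_g = Ad*_{g⁻¹}` and `T_e Υ*_η = Ad*_{η⁻¹}`, and satisfying the
matched-pair compatibility conditions.

If `Υ̃ = U'` is another action such that `(Υ̃, Υ*)` is also a coconjugation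
matched pair, then there exists `c : G × π₀(G*) → G*` with `c(g, [e]) = e` and
`Υ̃(g, η) = c(g, [η]) · Υ(g, η)`; in particular if `G*` is connected then
`Υ̃ = Υ`.
-/
theorem coconjugation_action_unique_up_to_component_constant
    {E : Type*} [NormedAddCommGroup E] [NormedSpace ℝ E]
    {E' : Type*} [NormedAddCommGroup E'] [NormedSpace ℝ E']
    {G : Type*} [TopologicalSpace G] [ChartedSpace E G] [Group G]
    [LieGroup 𝓘(ℝ, E) (⊤ : ℕ∞) G]
    {H : Type*} [TopologicalSpace H] [ChartedSpace E' H] [Group H]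
    [LieGroup 𝓘(ℝ, E') (⊤ : ℕ∞) H]
    -- the duality pairing of the Lie algebras
    (κ : E →ₗ[ℝ] E' →ₗ[ℝ] ℝ)
    (hnd₁ : ∀ A : E, (∀ μ : E', κ A μ = 0) → A = 0)
    (hnd₂ : ∀ μ : E', (∀ A : E, κ A μ = 0) → μ = 0)
    -- the coadjoint actions, characterised via κ and the adjoint actions
    (coadG : G → E' →L[ℝ] E')
    (hcoadG : ∀ (a : G) (A : E) (μ : E'),
      κ A (coadG a μ)
        = κ (mfderiv 𝓘(ℝ, E) 𝓘(ℝ, E) (fun x => a * x * a⁻¹) (1 : G) A) μ)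
    (coadH : H → E →L[ℝ] E)
    (hcoadH : ∀ (b : H) (A : E) (μ : E'),
      κ (coadH b A) μ
        = κ A (mfderiv 𝓘(ℝ, E') 𝓘(ℝ, E') (fun y => b * y * b⁻¹) (1 : H) μ))
    -- the two coconjugation actions U, U' of G on H and the action Us of H on G
    (U U' : G → H → H) (Us : H → G → G)
    -- smoothness
    (hUsm : ContMDiff (𝓘(ℝ, E).prod 𝓘(ℝ, E')) 𝓘(ℝ, E') (⊤ : ℕ∞)
      (fun p : G × H => U p.1 p.2))
    (hU'sm : ContMDiff (𝓘(ℝ, E).prod 𝓘(ℝ, E')) 𝓘(ℝ, E') (⊤ : ℕ∞)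
      (fun p : G × H => U' p.1 p.2))
    (hUssm : ContMDiff (𝓘(ℝ, E').prod 𝓘(ℝ, E)) 𝓘(ℝ, E) (⊤ : ℕ∞)
      (fun p : H × G => Us p.1 p.2))
    -- U, U' and Us are left actions
    (hU1 : ∀ η : H, U 1 η = η)
    (hUmul : ∀ (g₁ g₂ : G) (η : H), U (g₁ * g₂) η = U g₁ (U g₂ η))
    (hU'1 : ∀ η : H, U' 1 η = η)
    (hU'mul : ∀ (g₁ g₂ : G) (η : H), U' (g₁ * g₂) η = U' g₁ (U' g₂ η))
    (hUs1 : ∀ g : G, Us 1 g = g)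
    (hUsmul : ∀ (η₁ η₂ : H) (g : G), Us (η₁ * η₂) g = Us η₁ (Us η₂ g))
    -- the actions fix the identities
    (hUe : ∀ g : G, U g 1 = 1)
    (hU'e : ∀ g : G, U' g 1 = 1)
    (hUse : ∀ η : H, Us η 1 = 1)
    -- the derivatives at the identity integrate the coadjoint actions:
    -- T_e Υ_g = Ad*_{g⁻¹},  T_e Υ̃_g = Ad*_{g⁻¹},  T_e Υ*_η = Ad*_{η⁻¹}
    (hdU : ∀ (g : G) (μ : E'),
      mfderiv 𝓘(ℝ, E') 𝓘(ℝ, E') (fun η => U g η) (1 : H) μ = coadG g⁻¹ μ)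
    (hdU' : ∀ (g : G) (μ : E'),
      mfderiv 𝓘(ℝ, E') 𝓘(ℝ, E') (fun η => U' g η) (1 : H) μ = coadG g⁻¹ μ)
    (hdUs : ∀ (η : H) (A : E),
      mfderiv 𝓘(ℝ, E) 𝓘(ℝ, E) (fun x => Us η x) (1 : G) A = coadH η⁻¹ A)
    -- matched-pair compatibility for (U, Us) and for (U', Us)
    (hmpU : ∀ (g : G) (η₁ η₂ : H),
      U g (η₁ * η₂) = U g η₁ * U (Us η₁⁻¹ g) η₂)
    (hmpU' : ∀ (g : G) (η₁ η₂ : H),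
      U' g (η₁ * η₂) = U' g η₁ * U' (Us η₁⁻¹ g) η₂)
    (hmpUs : ∀ (η : H) (g₁ g₂ : G),
      Us η (g₁ * g₂) = Us (U g₂ η⁻¹)⁻¹ g₁ * Us η g₂)
    (hmpUs' : ∀ (η : H) (g₁ g₂ : G),
      Us η (g₁ * g₂) = Us (U' g₂ η⁻¹)⁻¹ g₁ * Us η g₂) :
    ∃ c : G → ConnectedComponents H → H,
      (∀ g : G, c g (ConnectedComponents.mk (1 : H)) = 1) ∧
      (∀ (g : G) (η : H), U' g η = c g (ConnectedComponents.mk η) * U g η) ∧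
      (ConnectedSpace H → ∀ (g : G) (η : H), U' g η = U g η) := by

  classical
  set Φ : G → H → H := fun g η => U' g η * (U g η)⁻¹ with hΦ
  have hU'g : ∀ g : G, ContMDiff 𝓘(ℝ, E') 𝓘(ℝ, E') (⊤ : ℕ∞) (fun η => U' g η) := fun g =>
    hU'sm.comp (contMDiff_const.prodMk contMDiff_id)
  have hUg : ∀ g : G, ContMDiff 𝓘(ℝ, E') 𝓘(ℝ, E') (⊤ : ℕ∞) (fun η => U g η) := fun g =>
    hUsm.comp (contMDiff_const.prodMk contMDiff_id)
  have hΦsm : ∀ g, ContMDiff 𝓘(ℝ, E') 𝓘(ℝ, E') (⊤ : ℕ∞) (Φ g) := fun g =>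
    (hU'g g).mul (hUg g).inv
  have hΦ1 : ∀ g, Φ g 1 = 1 := by
    intro g; simp only [hΦ, hU'e g, hUe g, inv_one, mul_one]
  -- derivative of Φ g at the identity is zero
  have hd1 : ∀ g : G, mfderiv 𝓘(ℝ, E') 𝓘(ℝ, E') (Φ g) (1 : H) = 0 := by
    intro g
    set m : H × H → H := fun p => p.1 * p.2⁻¹ with hm
    set P : H → H × H := fun η => (U' g η, U g η) with hP
    have hmsm : ContMDiff (𝓘(ℝ, E').prod 𝓘(ℝ, E')) 𝓘(ℝ, E') (⊤ : ℕ∞) m :=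
      contMDiff_fst.mul contMDiff_snd.inv
    have hPm : MDifferentiableAt 𝓘(ℝ, E') (𝓘(ℝ, E').prod 𝓘(ℝ, E')) P 1 :=
      ((hU'g g).mdifferentiableAt (by simp)).prodMk ((hUg g).mdifferentiableAt (by simp))
    have hP1 : P 1 = (1, 1) := by simp [hP, hU'e g, hUe g]
    have hmm : MDifferentiableAt (𝓘(ℝ, E').prod 𝓘(ℝ, E')) 𝓘(ℝ, E') m ((1 : H), (1 : H)) :=
      hmsm.mdifferentiableAt (by simp)
    have hcomp : mfderiv 𝓘(ℝ, E') 𝓘(ℝ, E') (m ∘ P) 1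
        = (mfderiv (𝓘(ℝ, E').prod 𝓘(ℝ, E')) 𝓘(ℝ, E') m (P 1)).comp
          (mfderiv 𝓘(ℝ, E') (𝓘(ℝ, E').prod 𝓘(ℝ, E')) P 1) :=
      mfderiv_comp (1 : H) (by rw [hP1]; exact hmm) hPm
    have hPd : mfderiv 𝓘(ℝ, E') (𝓘(ℝ, E').prod 𝓘(ℝ, E')) P 1
        = (mfderiv 𝓘(ℝ, E') 𝓘(ℝ, E') (fun η => U' g η) 1).prod
          (mfderiv 𝓘(ℝ, E') 𝓘(ℝ, E') (fun η => U g η) 1) :=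
      MDifferentiableAt.mfderiv_prod ((hU'g g).mdifferentiableAt (by simp))
        ((hUg g).mdifferentiableAt (by simp))
    set q : H → H × H := fun η => (η, η) with hq
    have hqm : MDifferentiableAt 𝓘(ℝ, E') (𝓘(ℝ, E').prod 𝓘(ℝ, E')) q 1 :=
      mdifferentiableAt_id.prodMk mdifferentiableAt_id
    have hmq : (m ∘ q) = fun _ : H => (1 : H) := funext fun η => mul_inv_cancel η
    have hmq0 : mfderiv 𝓘(ℝ, E') 𝓘(ℝ, E') (m ∘ q) 1 = 0 := by rw [hmq]; exact mfderiv_const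
    have hmqc : mfderiv 𝓘(ℝ, E') 𝓘(ℝ, E') (m ∘ q) 1
        = (mfderiv (𝓘(ℝ, E').prod 𝓘(ℝ, E')) 𝓘(ℝ, E') m ((1 : H), (1 : H))).comp
          (mfderiv 𝓘(ℝ, E') (𝓘(ℝ, E').prod 𝓘(ℝ, E')) q 1) :=
      mfderiv_comp (1 : H) hmm hqm
    have hqd : mfderiv 𝓘(ℝ, E') (𝓘(ℝ, E').prod 𝓘(ℝ, E')) q 1
        = (mfderiv 𝓘(ℝ, E') 𝓘(ℝ, E') (@id H) 1).prod
          (mfderiv 𝓘(ℝ, E') 𝓘(ℝ, E') (@id H) 1) :=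
      MDifferentiableAt.mfderiv_prod (f := @id H) (g := @id H)
        mdifferentiableAt_id mdifferentiableAt_id
    have hΦmP : Φ g = m ∘ P := rfl
    ext μ
    rw [hΦmP, hcomp, hP1]
    have step1 : (mfderiv 𝓘(ℝ, E') (𝓘(ℝ, E').prod 𝓘(ℝ, E')) P 1) μ
        = (coadG g⁻¹ μ, coadG g⁻¹ μ) := by
      rw [hPd]
      exact Prod.ext (hdU' g μ) (hdU g μ)
    have step2 : (mfderiv 𝓘(ℝ, E') (𝓘(ℝ, E').prod 𝓘(ℝ, E')) q 1) (coadG g⁻¹ μ)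
        = (coadG g⁻¹ μ, coadG g⁻¹ μ) := by
      rw [hqd]
      exact Prod.ext (by rw [mfderiv_id]; rfl) (by rw [mfderiv_id]; rfl)
    have step3 : (mfderiv (𝓘(ℝ, E').prod 𝓘(ℝ, E')) 𝓘(ℝ, E') m ((1 : H), (1 : H)))
        (coadG g⁻¹ μ, coadG g⁻¹ μ) = 0 := by
      have h1 := DFunLike.congr_fun hmqc (coadG g⁻¹ μ)
      have h2 := DFunLike.congr_fun hmq0 (coadG g⁻¹ μ)
      calc (mfderiv (𝓘(ℝ, E').prod 𝓘(ℝ, E')) 𝓘(ℝ, E') m ((1 : H), (1 : H)))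
            (coadG g⁻¹ μ, coadG g⁻¹ μ)
          = (mfderiv (𝓘(ℝ, E').prod 𝓘(ℝ, E')) 𝓘(ℝ, E') m ((1 : H), (1 : H)))
            ((mfderiv 𝓘(ℝ, E') (𝓘(ℝ, E').prod 𝓘(ℝ, E')) q 1) (coadG g⁻¹ μ)) := by
            rw [step2]
        _ = (mfderiv 𝓘(ℝ, E') 𝓘(ℝ, E') (m ∘ q) 1) (coadG g⁻¹ μ) := h1.symm
        _ = 0 := h2
    calc ((mfderiv (𝓘(ℝ, E').prod 𝓘(ℝ, E')) 𝓘(ℝ, E') m ((1 : H), (1 : H))).comp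
          (mfderiv 𝓘(ℝ, E') (𝓘(ℝ, E').prod 𝓘(ℝ, E')) P 1)) μ
        = (mfderiv (𝓘(ℝ, E').prod 𝓘(ℝ, E')) 𝓘(ℝ, E') m ((1 : H), (1 : H)))
          ((mfderiv 𝓘(ℝ, E') (𝓘(ℝ, E').prod 𝓘(ℝ, E')) P 1) μ) := rfl
      _ = (mfderiv (𝓘(ℝ, E').prod 𝓘(ℝ, E')) 𝓘(ℝ, E') m ((1 : H), (1 : H)))
          (coadG g⁻¹ μ, coadG g⁻¹ μ) := by rw [step1]
      _ = 0 := step3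
  -- derivative of Φ g at every point is zero
  have hdall : ∀ (g : G) (η₀ : H), mfderiv 𝓘(ℝ, E') 𝓘(ℝ, E') (Φ g) η₀ = 0 := by
    intro g η₀
    set h : G := Us η₀⁻¹ g with hh
    have hco : Φ g = (fun y => U' g η₀ * y * (U g η₀)⁻¹) ∘ (Φ h ∘ fun η => η₀⁻¹ * η) := by
      funext η
      have e1 : η₀ * (η₀⁻¹ * η) = η := mul_inv_cancel_left η₀ η
      have e2 := hmpU' g η₀ (η₀⁻¹ * η)
      have e3 := hmpU g η₀ (η₀⁻¹ * η)
      rw [e1] at e2 e3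
      simp only [hΦ, Function.comp_apply]
      rw [e2, e3, ← hh]
      group
    have hL : MDifferentiableAt 𝓘(ℝ, E') 𝓘(ℝ, E') (fun η : H => η₀⁻¹ * η) η₀ :=
      ((contMDiff_const.mul contMDiff_id :
        ContMDiff 𝓘(ℝ, E') 𝓘(ℝ, E') (⊤ : ℕ∞) (fun η : H => η₀⁻¹ * η))).mdifferentiableAt (by simp)
    have hΦh : MDifferentiableAt 𝓘(ℝ, E') 𝓘(ℝ, E') (Φ h) (η₀⁻¹ * η₀) :=
      (hΦsm h).mdifferentiableAt (by simp)
    have hC : MDifferentiableAt 𝓘(ℝ, E') 𝓘(ℝ, E')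
        (fun y : H => U' g η₀ * y * (U g η₀)⁻¹) ((Φ h ∘ fun η => η₀⁻¹ * η) η₀) :=
      (((contMDiff_const.mul contMDiff_id).mul contMDiff_const :
        ContMDiff 𝓘(ℝ, E') 𝓘(ℝ, E') (⊤ : ℕ∞)
          (fun y : H => U' g η₀ * y * (U g η₀)⁻¹))).mdifferentiableAt (by simp)
    rw [hco, mfderiv_comp η₀ hC (hΦh.comp η₀ hL), mfderiv_comp η₀ hΦh hL]
    have e4 : η₀⁻¹ * η₀ = 1 := inv_mul_cancel η₀
    have hd1' : mfderiv 𝓘(ℝ, E') 𝓘(ℝ, E') (Φ h) (η₀⁻¹ * η₀) = 0 := by rw [e4]; exact hd1 h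
    rw [hd1', ContinuousLinearMap.zero_comp, ContinuousLinearMap.comp_zero]
  have hlc : ∀ g, IsLocallyConstant (Φ g) := fun g =>
    aux_isLocallyConstant_of_mfderiv_zero (hΦsm g).continuous
      ((hΦsm g).mdifferentiable (by simp)) (hdall g)
  have hsame : ∀ (g : G) (η η' : H),
      connectedComponent η = connectedComponent η' → Φ g η = Φ g η' := by
    intro g η η' hcc
    exact (hlc g).apply_eq_of_isPreconnected isPreconnected_connectedComponent
      mem_connectedComponent (by rw [hcc]; exact mem_connectedComponent)
  have hout : ∀ η : H,
      connectedComponent (Quotient.out (ConnectedComponents.mk η)) = connectedComponent η := by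
    intro η
    exact ConnectedComponents.coe_eq_coe.1 (Quotient.out_eq' _)
  refine ⟨fun g t => Φ g (Quotient.out t), ?_, ?_, ?_⟩
  · intro g
    show Φ g (Quotient.out (ConnectedComponents.mk (1 : H))) = 1
    rw [hsame g _ 1 (hout 1), hΦ1 g]
  · intro g η
    show U' g η = Φ g (Quotient.out (ConnectedComponents.mk η)) * U g η
    rw [hsame g _ η (hout η)]
    simp only [hΦ]
    rw [inv_mul_cancel_right]
  · intro hcon g η
    have h1 : connectedComponent η = connectedComponent (1 : H) := by
      rw [PreconnectedSpace.connectedComponent_eq_univ,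
        PreconnectedSpace.connectedComponent_eq_univ]
    have h2 : Φ g η = 1 := by rw [hsame g η 1 h1, hΦ1 g]
    have h3 : U' g η * (U g η)⁻¹ = 1 := h2
    exact mul_inv_eq_one.1 h3
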